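/- Let p ≥ 7 be a prime and define g_λ = (6λ)! / ((2λ)! (3λ)! 2^{3λ} 3^{2λ}). Then for λ = p^r with r ≥ 0, the p-adic valuation of g_λ equals (p^r − 1)/(p − 1), which equals v_p(λ!). -/

import Mathlib

open Finset in
lemma aux_val_fact (p : ℕ) (hp : p.Prime) (k : ℕ) (_hk0 : 0 < k) (hkp : k < p) (r : ℕ) :
    padicValNat p ((k * p ^ r).factorial) = k * ∑ i ∈ range r, p ^ i := by
  haveI : Fact p.Prime := ⟨hp⟩
  induction r with
  | zero =>
    simp only [pow_zero, mul_one, range_zero, sum_empty, mul_zero]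
    apply padicValNat.eq_zero_of_not_dvd
    intro h
    have := (Nat.Prime.dvd_factorial hp).mp h
    omega
  | succ r ih =>
    have h1 : k * p ^ (r + 1) = p * (k * p ^ r) := by ring
    rw [h1, padicValNat_factorial_mul, ih, Finset.sum_range_succ]
    ring

theorem stmt_8 (p : ℕ) (hp : p.Prime) (hp7 : 7 ≤ p) (r : ℕ) :
    padicValRat p (((Nat.factorial (6 * p ^ r) : ℚ) /
        ((Nat.factorial (2 * p ^ r) : ℚ) * (Nat.factorial (3 * p ^ r) : ℚ) *
          2 ^ (3 * p ^ r) * 3 ^ (2 * p ^ r)))) =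
      ((p : ℤ) ^ r - 1) / ((p : ℤ) - 1) ∧
    padicValRat p (((Nat.factorial (6 * p ^ r) : ℚ) /
        ((Nat.factorial (2 * p ^ r) : ℚ) * (Nat.factorial (3 * p ^ r) : ℚ) *
          2 ^ (3 * p ^ r) * 3 ^ (2 * p ^ r)))) =
      (padicValNat p (Nat.factorial (p ^ r)) : ℤ) := by
  haveI : Fact p.Prime := ⟨hp⟩
  set S : ℕ := ∑ i ∈ Finset.range r, p ^ i with hS
  have h6 : padicValNat p ((6 * p ^ r).factorial) = 6 * S := aux_val_fact p hp 6 (by norm_num) (by omega) r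
  have h2 : padicValNat p ((2 * p ^ r).factorial) = 2 * S := aux_val_fact p hp 2 (by norm_num) (by omega) r
  have h3 : padicValNat p ((3 * p ^ r).factorial) = 3 * S := aux_val_fact p hp 3 (by norm_num) (by omega) r
  have h1 : padicValNat p ((p ^ r).factorial) = S := by
    have := aux_val_fact p hp 1 (by norm_num) (by omega) r
    simpa using this
  have hv2 : padicValRat p (2 : ℚ) = 0 := by
    have h : padicValNat p 2 = 0 :=
      padicValNat.eq_zero_of_not_dvd (fun h => by have := Nat.le_of_dvd (by norm_num) h; omega)
    rw [show ((2:ℚ)) = ((2:ℕ):ℚ) by norm_num, padicValRat.of_nat, h, Nat.cast_zero]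
  have hv3 : padicValRat p (3 : ℚ) = 0 := by
    have h : padicValNat p 3 = 0 :=
      padicValNat.eq_zero_of_not_dvd (fun h => by have := Nat.le_of_dvd (by norm_num) h; omega)
    rw [show ((3:ℚ)) = ((3:ℕ):ℚ) by norm_num, padicValRat.of_nat, h, Nat.cast_zero]
  have hf6 : ((Nat.factorial (6 * p ^ r) : ℚ)) ≠ 0 := Nat.cast_ne_zero.mpr (Nat.factorial_ne_zero _)
  have hf2 : ((Nat.factorial (2 * p ^ r) : ℚ)) ≠ 0 := Nat.cast_ne_zero.mpr (Nat.factorial_ne_zero _)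
  have hf3 : ((Nat.factorial (3 * p ^ r) : ℚ)) ≠ 0 := Nat.cast_ne_zero.mpr (Nat.factorial_ne_zero _)
  have hp2 : ((2:ℚ)) ^ (3 * p ^ r) ≠ 0 := by positivity
  have hp3 : ((3:ℚ)) ^ (2 * p ^ r) ≠ 0 := by positivity
  have hval : padicValRat p (((Nat.factorial (6 * p ^ r) : ℚ) /
        ((Nat.factorial (2 * p ^ r) : ℚ) * (Nat.factorial (3 * p ^ r) : ℚ) *
          2 ^ (3 * p ^ r) * 3 ^ (2 * p ^ r)))) = (S : ℤ) := by
    rw [padicValRat.div (by exact hf6) (by positivity),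
        padicValRat.mul (by positivity) hp3,
        padicValRat.mul (by positivity) hp2,
        padicValRat.mul hf2 hf3,
        padicValRat.pow (2 : ℚ), padicValRat.pow (3 : ℚ),
        hv2, hv3, padicValRat.of_nat, padicValRat.of_nat, padicValRat.of_nat,
        h6, h2, h3]
    push_cast
    ring
  have hdiv : ((p : ℤ) ^ r - 1) / ((p : ℤ) - 1) = (S : ℤ) := by
    have hgeom : (S : ℤ) * ((p : ℤ) - 1) = (p : ℤ) ^ r - 1 := by
      have := geom_sum_mul (p : ℤ) r
      rw [hS]
      push_cast
      linarith [this]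
    have hne : ((p : ℤ) - 1) ≠ 0 := by
      have : (7 : ℤ) ≤ (p : ℤ) := by exact_mod_cast hp7
      omega
    rw [← hgeom, Int.mul_ediv_cancel _ hne]
  exact ⟨by rw [hval, hdiv], by rw [hval, h1]⟩
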